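/- If φ(x) = x^p (p ≥ 1) and ψ(x) = exp(x^β) − 1 (β > 0), then ζ(x) = sup_{y ≥ 0} (φ(xy) − ψ(y)/y) is equivalent to x ↦ x^p (log x)^{p/β} for large x. -/

import Mathlib

open Filter Topology MeasureTheory
open scoped ENNReal
noncomputable section

/-- A Young function: strictly increasing, convex on `[0,∞)`, vanishing at `0`. -/
def IsYoung (f : ℝ → ℝ) : Prop :=
  StrictMonoOn f (Set.Ici 0) ∧ ConvexOn ℝ (Set.Ici 0) f ∧ f 0 = 0

/-- Legendre transform of a real function (sup over `y ≥ 0`), `ℝ≥0∞`-valued. -/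
def Leg (f : ℝ → ℝ) (x : ℝ) : ℝ≥0∞ :=
  ⨆ y : {y : ℝ // 0 ≤ y}, ENNReal.ofReal (x * y - f y)

/-- Legendre transform of an `ℝ≥0∞`-valued function. -/
def LegE (f : ℝ → ℝ≥0∞) (x : ℝ) : ℝ≥0∞ :=
  ⨆ y : {y : ℝ // 0 ≤ y}, (ENNReal.ofReal (x * y) - f y)

/-- Monotone extension of a real function on `[0,∞)` to `ℝ≥0∞` arguments. -/
def extE (f : ℝ → ℝ) (t : ℝ≥0∞) : ℝ≥0∞ :=
  ⨆ s : {s : ℝ // 0 ≤ s ∧ ENNReal.ofReal s ≤ t}, ENNReal.ofReal (f s)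

/-- Monotone extension of an `ℝ≥0∞`-valued function to `ℝ≥0∞` arguments. -/
def extLT (f : ℝ → ℝ≥0∞) (t : ℝ≥0∞) : ℝ≥0∞ :=
  ⨆ s : {s : ℝ // 0 ≤ s ∧ ENNReal.ofReal s ≤ t}, f s

/-- Generalized (right-continuous) inverse of an `ℝ≥0∞`-valued function. -/
def invE (g : ℝ → ℝ≥0∞) (t : ℝ≥0∞) : ℝ≥0∞ :=
  ⨅ s : {s : ℝ // 0 ≤ s ∧ t ≤ g s}, ENNReal.ofReal s

/-- `ρ(x) = sup_{y ≥ 0} (φ(xy) - ψ(y))/y`. -/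
def rhoSup (φ ψ : ℝ → ℝ) (x : ℝ) : ℝ≥0∞ :=
  ⨆ y : {y : ℝ // 0 ≤ y}, ENNReal.ofReal ((φ (x * y) - ψ y) / y)

/-- `ζ(x) = sup_{y ≥ 0} (φ(xy) - ψ(y)/y)`. -/
def zetaSup (φ ψ : ℝ → ℝ) (x : ℝ) : ℝ≥0∞ :=
  ⨆ y : {y : ℝ // 0 ≤ y}, ENNReal.ofReal (φ (x * y) - ψ y / y)

/-- Domination order on real functions: `f(x) ≤ C₁ g(C₂ x)` for large `x`. -/
def DominR (f g : ℝ → ℝ) : Prop :=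
  ∃ C₁ C₂ x₀ : ℝ, 0 < C₁ ∧ 0 < C₂ ∧ 0 < x₀ ∧ ∀ x ≥ x₀, f x ≤ C₁ * g (C₂ * x)

/-- Equivalence of real functions: mutual domination. -/
def EquivR (f g : ℝ → ℝ) : Prop := DominR f g ∧ DominR g f

/-- Domination order on `ℝ≥0∞`-valued functions. -/
def DominE (f g : ℝ → ℝ≥0∞) : Prop :=
  ∃ C₁ C₂ x₀ : ℝ, 0 < C₁ ∧ 0 < C₂ ∧ 0 < x₀ ∧
    ∀ x ≥ x₀, f x ≤ ENNReal.ofReal C₁ * g (C₂ * x)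

/-- Equivalence of `ℝ≥0∞`-valued functions: mutual domination. -/
def EquivE (f g : ℝ → ℝ≥0∞) : Prop := DominE f g ∧ DominE g f

/-- If φ(x) = x^p (p ≥ 1) and ψ(x) = exp(x^β) − 1 (β > 0) then
ζ(x) ≃ x^p (log x)^(p/β). -/
lemma exists_exp_dom (p β : ℝ) (hβ : 0 < β) :
    ∃ M : ℝ, 1 ≤ M ∧ ∀ t ≥ M, 2 * t ^ (p + 1) ≤ Real.exp (t ^ β / 2) := by
  have h1 : Tendsto (fun s : ℝ => Real.exp s / s ^ ((p+1)/β)) atTop atTop :=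
    tendsto_exp_div_rpow_atTop _
  have h2 : Tendsto (fun t : ℝ => t ^ β / 2) atTop atTop :=
    (tendsto_rpow_atTop hβ).atTop_div_const two_pos
  have h3 := h1.comp h2
  have h4 : ∀ᶠ t in atTop, 2 * 2 ^ ((p+1)/β) ≤ Real.exp (t^β/2) / (t^β/2) ^ ((p+1)/β) :=
    h3.eventually_ge_atTop _
  rw [eventually_atTop] at h4
  obtain ⟨a, ha⟩ := h4
  refine ⟨max a 1, le_max_right _ _, fun t ht => ?_⟩
  have ht1 : (1:ℝ) ≤ t := le_trans (le_max_right a 1) ht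
  have ht0 : (0:ℝ) < t := lt_of_lt_of_le one_pos ht1
  have hb0 : (0:ℝ) < t ^ β := Real.rpow_pos_of_pos ht0 β
  have key := ha t (le_trans (le_max_left a 1) ht)
  have hpos : (0:ℝ) < (t^β/2) ^ ((p+1)/β) := Real.rpow_pos_of_pos (by linarith) _
  rw [le_div_iff₀ hpos] at key
  have e1 : (t^β/2) ^ ((p+1)/β) = (t^β) ^ ((p+1)/β) / 2 ^ ((p+1)/β) :=
    Real.div_rpow hb0.le (le_of_lt two_pos) _
  have e2 : (t^β) ^ ((p+1)/β) = t ^ (p+1) := by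
    rw [← Real.rpow_mul ht0.le]
    congr 1
    field_simp
  have h2q : (0:ℝ) < (2:ℝ) ^ ((p+1)/β) := Real.rpow_pos_of_pos two_pos _
  calc 2 * t ^ (p+1) = 2 * 2 ^ ((p+1)/β) * ((t^β/2) ^ ((p+1)/β)) := by
        rw [e1, e2]; field_simp
    _ ≤ Real.exp (t^β/2) := key

set_option maxHeartbeats 1000000 in
theorem stmt13 (p β : ℝ) (hp : 1 ≤ p) (hβ : 0 < β) :
    EquivE (zetaSup (fun t => t ^ p) (fun t => Real.exp (t ^ β) - 1))
      (fun x => ENNReal.ofReal (x ^ p * Real.log x ^ (p / β))) := by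
  constructor
  · unfold DominE zetaSup
    have hp0 : (0:ℝ) < p := lt_of_lt_of_le one_pos hp
    obtain ⟨M, hM1, hM⟩ := exists_exp_dom p β hβ
    set K : ℝ := 2*p + 2 with hK
    have hK0 : (0:ℝ) < K := by positivity
    refine ⟨K ^ (p/β), 1, Real.exp (max (M ^ β) 1),
      Real.rpow_pos_of_pos hK0 _, one_pos, Real.exp_pos _, fun x hx => ?_⟩
    simp only [one_mul]
    set L := Real.log x with hL
    have hx0 : (0:ℝ) < x := lt_of_lt_of_le (Real.exp_pos _) hx
    have hLge : max (M ^ β) 1 ≤ L := by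
      rw [hL, Real.le_log_iff_exp_le hx0]; exact hx
    have hL1 : (1:ℝ) ≤ L := le_trans (le_max_right _ _) hLge
    have hLM : M ^ β ≤ L := le_trans (le_max_left _ _) hLge
    have hL0 : (0:ℝ) < L := lt_of_lt_of_le one_pos hL1
    have hx1 : (1:ℝ) ≤ x := by
      calc (1:ℝ) = Real.exp 0 := Real.exp_zero.symm
      _ ≤ Real.exp (max (M^β) 1) := Real.exp_le_exp.mpr (le_trans zero_le_one (le_max_right _ _))
      _ ≤ x := hx
    set y₀ : ℝ := (K * L) ^ (1/β) with hy₀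
    have hKL0 : (0:ℝ) < K * L := by positivity
    have hy₀0 : (0:ℝ) < y₀ := Real.rpow_pos_of_pos hKL0 _
    have hy₀β : y₀ ^ β = K * L := by
      rw [hy₀, ← Real.rpow_mul hKL0.le, one_div, inv_mul_cancel₀ hβ.ne', Real.rpow_one]
    have hRHS0 : (0:ℝ) ≤ K ^ (p/β) * (x ^ p * L ^ (p/β)) := by positivity
    rw [show ENNReal.ofReal (K ^ (p/β)) * ENNReal.ofReal (x ^ p * L ^ (p/β))
        = ENNReal.ofReal (K ^ (p/β) * (x ^ p * L ^ (p/β))) from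
        (ENNReal.ofReal_mul (by positivity)).symm]
    refine iSup_le fun ⟨y, hy⟩ => ENNReal.ofReal_le_ofReal ?_
    simp only
    by_cases hcase : y ≤ y₀
    · -- small y
      have hψ : 0 ≤ (Real.exp (y ^ β) - 1) / y := by
        apply div_nonneg _ hy
        have : (1:ℝ) ≤ Real.exp (y ^ β) := by
          rw [← Real.exp_zero]; exact Real.exp_le_exp.mpr (Real.rpow_nonneg hy β)
        linarith
      have h1 : (x*y)^p ≤ (x*y₀)^p :=
        Real.rpow_le_rpow (by positivity) (mul_le_mul_of_nonneg_left hcase hx0.le) hp0.le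
      have h2 : (x*y₀)^p = x^p * (K^(p/β) * L^(p/β)) := by
        rw [Real.mul_rpow hx0.le hy₀0.le, hy₀, ← Real.rpow_mul hKL0.le,
          Real.mul_rpow hK0.le hL0.le]
        congr 2 <;> · congr 1; field_simp
      nlinarith [Real.rpow_nonneg hx0.le p, Real.rpow_nonneg hK0.le (p/β),
        Real.rpow_nonneg hL0.le (p/β)]
    · -- large y
      push_neg at hcase
      have hyM : M ≤ y := by
        have : M = (M ^ β) ^ (1/β) := by
          rw [← Real.rpow_mul (by positivity), mul_one_div, div_self hβ.ne', Real.rpow_one]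
        calc M = (M ^ β) ^ (1/β) := this
          _ ≤ (K * L) ^ (1/β) := by
              apply Real.rpow_le_rpow (by positivity) _ (by positivity)
              calc M ^ β ≤ L := hLM
                _ ≤ K * L := by nlinarith
          _ ≤ y := hcase.le
      have hy1 : (1:ℝ) ≤ y := le_trans hM1 hyM
      have hy0 : (0:ℝ) < y := lt_of_lt_of_le one_pos hy1
      have hyβ : K * L ≤ y ^ β := by
        rw [← hy₀β]; exact Real.rpow_le_rpow hy₀0.le hcase.le hβ.le
      have hexp1 : 2 * y ^ (p+1) ≤ Real.exp (y ^ β / 2) := hM y hyM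
      have hexp2 : Real.exp ((p+1) * L) ≤ Real.exp (y ^ β / 2) := by
        apply Real.exp_le_exp.mpr; rw [hK] at hyβ; linarith
      have hxP : Real.exp ((p+1) * L) = x ^ (p+1) := by
        rw [hL, Real.rpow_def_of_pos hx0, mul_comm]
      have hbig : 2 * y ^ (p+1) * x ^ (p+1) ≤ Real.exp (y ^ β) := by
        calc 2 * y ^ (p+1) * x ^ (p+1)
            ≤ Real.exp (y ^ β / 2) * Real.exp (y ^ β / 2) := by
              apply mul_le_mul hexp1 (hxP ▸ hexp2) (by positivity) (Real.exp_nonneg _)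
          _ = Real.exp (y ^ β) := by rw [← Real.exp_add]; ring_nf
      have hyx1 : (1:ℝ) ≤ y ^ (p+1) * x ^ (p+1) := by
        have := Real.one_le_rpow hy1 (by positivity : (0:ℝ) ≤ p+1)
        have := Real.one_le_rpow hx1 (by positivity : (0:ℝ) ≤ p+1)
        nlinarith
      have hxp : x ^ p ≤ x ^ (p+1) := Real.rpow_le_rpow_of_exponent_le hx1 (by linarith)
      have hkey : x ^ p * y ^ (p+1) ≤ Real.exp (y ^ β) - 1 := by
        have h5 : x ^ p * y ^ (p+1) ≤ x ^ (p+1) * y ^ (p+1) :=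
          mul_le_mul_of_nonneg_right hxp (Real.rpow_nonneg hy0.le _)
        nlinarith
      have hdiv : x ^ p * y ^ p ≤ (Real.exp (y ^ β) - 1) / y := by
        rw [le_div_iff₀ hy0]
        calc x ^ p * y ^ p * y = x ^ p * y ^ (p+1) := by
              rw [Real.rpow_add_one hy0.ne' p]; ring
          _ ≤ _ := hkey
      have hmul : (x * y) ^ p = x ^ p * y ^ p := Real.mul_rpow hx0.le hy0.le
      have : (x * y) ^ p - (Real.exp (y ^ β) - 1) / y ≤ 0 := by rw [hmul]; linarith
      linarith
  · unfold DominE zetaSup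
    have hp0 : (0:ℝ) < p := lt_of_lt_of_le one_pos hp
    refine ⟨2, 1, Real.exp (max 1 ((2:ℝ) ^ (β/p))), two_pos, one_pos, Real.exp_pos _,
      fun x hx => ?_⟩
    simp only [one_mul]
    set L := Real.log x with hL
    have hx0 : (0:ℝ) < x := lt_of_lt_of_le (Real.exp_pos _) hx
    have hLge : max 1 ((2:ℝ) ^ (β/p)) ≤ L := by
      rw [hL, Real.le_log_iff_exp_le hx0]; exact hx
    have hL1 : (1:ℝ) ≤ L := le_trans (le_max_left _ _) hLge
    have hL2 : (2:ℝ) ^ (β/p) ≤ L := le_trans (le_max_right _ _) hLge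
    have hL0 : (0:ℝ) < L := lt_of_lt_of_le one_pos hL1
    have hx1 : (1:ℝ) ≤ x := by
      calc (1:ℝ) = Real.exp 0 := Real.exp_zero.symm
      _ ≤ x := le_trans (Real.exp_le_exp.mpr (le_trans zero_le_one (le_max_left _ _))) hx
    set y : ℝ := L ^ (1/β) with hy
    have hy0 : (0:ℝ) < y := Real.rpow_pos_of_pos hL0 _
    have hy1 : (1:ℝ) ≤ y := Real.one_le_rpow hL1 (by positivity)
    have hyβ : y ^ β = L := by
      rw [hy, ← Real.rpow_mul hL0.le, one_div, inv_mul_cancel₀ hβ.ne', Real.rpow_one]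
    have hyp : y ^ p = L ^ (p/β) := by
      rw [hy, ← Real.rpow_mul hL0.le]
      congr 1; field_simp
    -- L^(p/β) ≥ 2
    have hLp2 : (2:ℝ) ≤ L ^ (p/β) := by
      have h1 : ((2:ℝ) ^ (β/p)) ^ (p/β) ≤ L ^ (p/β) :=
        Real.rpow_le_rpow (by positivity) hL2 (by positivity)
      have h2 : ((2:ℝ) ^ (β/p)) ^ (p/β) = 2 := by
        rw [← Real.rpow_mul (by norm_num)]
        rw [show β/p * (p/β) = 1 by field_simp, Real.rpow_one]
      linarith [h2 ▸ h1]
    have hxp : x ≤ x ^ p := by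
      calc x = x ^ (1:ℝ) := (Real.rpow_one x).symm
      _ ≤ x ^ p := Real.rpow_le_rpow_of_exponent_le hx1 hp
    set T : ℝ := x ^ p * L ^ (p/β) with hT
    have hT2x : 2 * x ≤ T := by
      calc 2 * x ≤ 2 * x ^ p := by linarith
      _ ≤ T := by rw [hT]; nlinarith [Real.rpow_nonneg hx0.le p]
    -- value at y
    have hψ : (Real.exp (y ^ β) - 1) / y ≤ x := by
      rw [hyβ, hL, Real.exp_log hx0]
      calc (x - 1) / y ≤ (x - 1) / 1 := by
            apply div_le_div_of_nonneg_left (by linarith) one_pos hy1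
        _ = x - 1 := div_one _
        _ ≤ x := by linarith
    have hval : T - x ≤ (x * y) ^ p - (Real.exp (y ^ β) - 1) / y := by
      have : (x * y) ^ p = T := by
        rw [Real.mul_rpow hx0.le hy0.le, hyp, hT]
      linarith [this, hψ]
    have hTv : T ≤ 2 * ((x * y) ^ p - (Real.exp (y ^ β) - 1) / y) := by linarith
    calc ENNReal.ofReal T ≤ ENNReal.ofReal (2 * ((x*y)^p - (Real.exp (y^β)-1)/y)) :=
          ENNReal.ofReal_le_ofReal hTv
      _ = ENNReal.ofReal 2 * ENNReal.ofReal ((x*y)^p - (Real.exp (y^β)-1)/y) :=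
          ENNReal.ofReal_mul (by norm_num)
      _ ≤ ENNReal.ofReal 2 * zetaSup (fun t => t ^ p) (fun t => Real.exp (t ^ β) - 1) x := by
          apply mul_le_mul_right
          exact le_iSup (fun z : {y : ℝ // 0 ≤ y} =>
            ENNReal.ofReal ((x * z.1) ^ p - (Real.exp (z.1 ^ β) - 1) / z.1)) ⟨y, hy0.le⟩
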